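/- arXiv:2105.01163 — 3 statements merged into one kernel-verified Lean document; each statement's English description precedes it below -/
import Mathlib

section
/- For all real numbers a and b, (1/2)·exp(min(a,b))·(a − b)² ≤ (exp(a) − exp(b))·a − (U(a) − U(b)) ≤ (1/2)·exp(max(a,b))·(a − b)². -/
/-- The entropy `c (log c - 1)` expressed in the entropy variable `η = log c`. -/
noncomputable def U (η : ℝ) : ℝ := Real.exp η * (η - 1)

-- h1 : 1 + t + t^2/2 ≤ exp t for 0 ≤ t : Real.quadratic_le_exp_of_nonneg

-- h2 : exp t - 1 - t ≤ exp t * t^2/2 for 0 ≤ t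
lemma exp_sub_le (t : ℝ) (ht : 0 ≤ t) :
    Real.exp t - 1 - t ≤ Real.exp t * t ^ 2 / 2 := by
  have hmono : MonotoneOn
      (fun x : ℝ => Real.exp x * x ^ 2 / 2 - (Real.exp x - 1 - x)) (Set.Ici 0) := by
    have hd : ∀ x : ℝ, HasDerivAt
        (fun x : ℝ => Real.exp x * x ^ 2 / 2 - (Real.exp x - 1 - x))
        ((Real.exp x * x ^ 2 + Real.exp x * (2 * x)) / 2 - (Real.exp x - 1)) x := by
      intro x
      have h1 : HasDerivAt (fun x : ℝ => Real.exp x * x ^ 2)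
          (Real.exp x * x ^ 2 + Real.exp x * (2 * x)) x := by
        have := (Real.hasDerivAt_exp x).fun_mul ((hasDerivAt_pow 2 x))
        simpa [mul_comm, pow_one] using this
      have h2 : HasDerivAt (fun x : ℝ => Real.exp x - 1 - x)
          (Real.exp x - 1) x := by
        have := ((Real.hasDerivAt_exp x).sub_const 1).fun_sub (hasDerivAt_id x)
        simpa using this
      exact (h1.div_const 2).sub h2
    apply monotoneOn_of_deriv_nonneg (convex_Ici 0)
    · exact (Differentiable.continuous (fun x => (hd x).differentiableAt)).continuousOn
    · intro x _
      exact ((hd x).differentiableAt).differentiableWithinAt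
    · intro x hx
      rw [interior_Ici] at hx
      rw [(hd x).deriv]
      have hx0 : (0:ℝ) ≤ x := le_of_lt hx
      have h1 : 1 - x ≤ Real.exp (-x) := by
        have := Real.add_one_le_exp (-x); linarith
      have h2 : Real.exp x * Real.exp (-x) = 1 := by
        rw [← Real.exp_add]; simp
      have h3 : Real.exp x * (1 - x) ≤ 1 := by
        calc Real.exp x * (1 - x) ≤ Real.exp x * Real.exp (-x) :=
              mul_le_mul_of_nonneg_left h1 (Real.exp_pos x).le
          _ = 1 := h2
      nlinarith [Real.exp_pos x, sq_nonneg x]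
  have h0 : (0:ℝ) ∈ Set.Ici (0:ℝ) := Set.self_mem_Ici
  have ht' : t ∈ Set.Ici (0:ℝ) := ht
  have := hmono h0 ht' ht
  simp only [Real.exp_zero] at this
  nlinarith [this]

-- h3 : t^2/2 ≤ exp t * (t-1) + 1 for 0 ≤ t
lemma sq_le_exp_mul (t : ℝ) (ht : 0 ≤ t) :
    t ^ 2 / 2 ≤ Real.exp t * (t - 1) + 1 := by
  have hmono : MonotoneOn
      (fun x : ℝ => Real.exp x * (x - 1) + 1 - x ^ 2 / 2) (Set.Ici 0) := by
    have hd : ∀ x : ℝ, HasDerivAt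
        (fun x : ℝ => Real.exp x * (x - 1) + 1 - x ^ 2 / 2)
        (Real.exp x * (x - 1) + Real.exp x * 1 - 2 * x / 2) x := by
      intro x
      have h1 : HasDerivAt (fun x : ℝ => Real.exp x * (x - 1))
          (Real.exp x * (x - 1) + Real.exp x * 1) x :=
        (Real.hasDerivAt_exp x).mul ((hasDerivAt_id x).sub_const 1)
      have h2 : HasDerivAt (fun x : ℝ => x ^ 2 / 2) (2 * x / 2) x := by
        simpa using (hasDerivAt_pow 2 x).div_const 2
      simpa using (h1.add_const 1).fun_sub h2
    apply monotoneOn_of_deriv_nonneg (convex_Ici 0)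
    · exact (Differentiable.continuous (fun x => (hd x).differentiableAt)).continuousOn
    · intro x _
      exact ((hd x).differentiableAt).differentiableWithinAt
    · intro x hx
      rw [interior_Ici] at hx
      rw [(hd x).deriv]
      have h1 : 1 + x ≤ Real.exp x := by have := Real.add_one_le_exp x; linarith
      nlinarith [le_of_lt (Set.mem_Ioi.mp hx)]
  have h0 : (0:ℝ) ∈ Set.Ici (0:ℝ) := Set.self_mem_Ici
  have := hmono h0 (Set.mem_Ici.mpr ht) ht
  simp only [Real.exp_zero] at this
  nlinarith [this]

-- h4 : exp t * (t-1) + 1 ≤ exp t * t^2/2 for 0 ≤ t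
lemma exp_mul_le (t : ℝ) (ht : 0 ≤ t) :
    Real.exp t * (t - 1) + 1 ≤ Real.exp t * t ^ 2 / 2 := by
  have h1 : 1 + t + t ^ 2 / 2 ≤ Real.exp t := Real.quadratic_le_exp_of_nonneg ht
  -- exp t * (1 - t + t^2/2) ≥ (1+t+t^2/2)(1-t+t^2/2) = 1 + t^4/4 ≥ 1
  have hpos : (0:ℝ) < 1 - t + t ^ 2 / 2 := by nlinarith [sq_nonneg (t - 1)]
  have h2 : (1 + t + t ^ 2 / 2) * (1 - t + t ^ 2 / 2) ≤ Real.exp t * (1 - t + t ^ 2 / 2) :=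
    mul_le_mul_of_nonneg_right h1 hpos.le
  nlinarith [h2, pow_le_pow_left₀ ht (le_refl t) 4, sq_nonneg (t^2)]

theorem bregman_remainder_two_sided_bound (a b : ℝ) :
    (1 / 2) * Real.exp (min a b) * (a - b) ^ 2
        ≤ (Real.exp a - Real.exp b) * a - (U a - U b) ∧
    (Real.exp a - Real.exp b) * a - (U a - U b)
        ≤ (1 / 2) * Real.exp (max a b) * (a - b) ^ 2 := by
  have hmid : (Real.exp a - Real.exp b) * a - (U a - U b)
      = Real.exp a - Real.exp b - Real.exp b * (a - b) := by
    simp only [U]; ring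
  rcases le_total b a with h | h
  · -- a ≥ b : min = b, max = a, t = a - b ≥ 0
    rw [min_eq_right h, max_eq_left h, hmid]
    set t := a - b with htdef
    have ht : 0 ≤ t := by simp [htdef]; linarith
    have hea : Real.exp a = Real.exp b * Real.exp t := by
      rw [← Real.exp_add, htdef]; ring_nf
    have h1 : 1 + t + t ^ 2 / 2 ≤ Real.exp t := Real.quadratic_le_exp_of_nonneg ht
    have h2 : Real.exp t - 1 - t ≤ Real.exp t * t ^ 2 / 2 := exp_sub_le t ht
    have hb := Real.exp_pos b
    constructor
    · rw [hea]; nlinarith [mul_le_mul_of_nonneg_left h1 hb.le]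
    · rw [hea]; nlinarith [mul_le_mul_of_nonneg_left h2 hb.le]
  · -- a ≤ b : min = a, max = b, t = b - a ≥ 0
    rw [min_eq_left h, max_eq_right h, hmid]
    set t := b - a with htdef
    have ht : 0 ≤ t := by simp [htdef]; linarith
    have heb : Real.exp b = Real.exp a * Real.exp t := by
      rw [← Real.exp_add, htdef]; ring_nf
    have h3 : t ^ 2 / 2 ≤ Real.exp t * (t - 1) + 1 := sq_le_exp_mul t ht
    have h4 : Real.exp t * (t - 1) + 1 ≤ Real.exp t * t ^ 2 / 2 := exp_mul_le t ht
    have hb := Real.exp_pos a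
    constructor
    · rw [heb]; nlinarith [mul_le_mul_of_nonneg_left h3 hb.le]
    · rw [heb]; nlinarith [mul_le_mul_of_nonneg_left h4 hb.le]
end

section
/- For all real numbers a and b, (exp(a) − exp(b))·a ≥ U(a) − U(b), with equality if and only if a = b. -/
theorem numerical_dissipation_nonneg (a b : ℝ) :
    (Real.exp a - Real.exp b) * a ≥ U a - U b ∧
    ((Real.exp a - Real.exp b) * a = U a - U b ↔ a = b) := by
  have hkey : (Real.exp a - Real.exp b) * a - (U a - U b)
      = Real.exp b * (Real.exp (a - b) - 1 - (a - b)) := by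
    simp [U, Real.exp_sub]
    field_simp
    ring
  have hpos : Real.exp b > 0 := Real.exp_pos b
  constructor
  · have h1 : Real.exp (a - b) - 1 - (a - b) ≥ 0 := by
      have := Real.add_one_le_exp (a - b); linarith
    nlinarith
  · constructor
    · intro h
      by_contra hne
      have hne' : a - b ≠ 0 := sub_ne_zero.mpr hne
      have h2 : (a - b) + 1 < Real.exp (a - b) := Real.add_one_lt_exp hne'
      nlinarith
    · intro h; subst h; simp [U]
end

section
/- Let s ≤ t be real numbers, let u : ℝ → ℝ be continuously differentiable on [s, t], and let p be a real number with p ≠ u(s). Then there exists ξ strictly between p and u(s) such that ∫_s^t (d/dτ)[exp(u(τ))]·u(τ) dτ + (exp(u(s)) − exp(p))·u(s) = U(u(t)) − U(p) + (1/2)·exp(ξ)·(p − u(s))². -/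
private lemma aux_hasDeriv (a : ℝ) (x : ℝ) :
    HasDerivAt (fun y => Real.exp y * (y - 1)) (x * Real.exp x) x := by
  have h : HasDerivAt (fun y => Real.exp y * (y - 1)) _ x :=
    ((Real.hasDerivAt_exp x).mul ((hasDerivAt_id x).sub_const 1))
  convert h using 1
  simp [id_eq]
  ring

private lemma aux_mono (f f' : ℝ → ℝ) (hf : ∀ x, HasDerivAt f (f' x) x)
    (hpos : ∀ x, x ≠ 0 → 0 < f' x) :
    (∀ d, 0 < d → f 0 < f d) ∧ (∀ d, d < 0 → f d < f 0) := by
  constructor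
  · intro d hd
    have : StrictMonoOn f (Set.Icc 0 d) := by
      apply strictMonoOn_of_deriv_pos (convex_Icc 0 d)
        (fun x _ => (hf x).continuousAt.continuousWithinAt)
      intro x hx
      rw [interior_Icc] at hx
      rw [(hf x).deriv]
      exact hpos x (ne_of_gt hx.1)
    exact this (Set.left_mem_Icc.2 hd.le) (Set.right_mem_Icc.2 hd.le) hd
  · intro d hd
    have : StrictMonoOn f (Set.Icc d 0) := by
      apply strictMonoOn_of_deriv_pos (convex_Icc d 0)
        (fun x _ => (hf x).continuousAt.continuousWithinAt)
      intro x hx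
      rw [interior_Icc] at hx
      rw [(hf x).deriv]
      exact hpos x (ne_of_lt hx.2)
    exact this (Set.left_mem_Icc.2 hd.le) (Set.right_mem_Icc.2 hd.le) hd

/-- `φ(d) = e^d (d-1) + 1` compared with `d²/2`. -/
private lemma phi_A :
    (∀ d, 0 < d → d ^ 2 / 2 < Real.exp d * (d - 1) + 1) ∧
    (∀ d, d < 0 → Real.exp d * (d - 1) + 1 < d ^ 2 / 2) := by
  have hf : ∀ x : ℝ, HasDerivAt (fun y => Real.exp y * (y - 1) + 1 - y ^ 2 / 2)
      (x * (Real.exp x - 1)) x := by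
    intro x
    have h : HasDerivAt (fun y => Real.exp y * (y - 1) + 1 - y ^ 2 / 2) _ x :=
      ((aux_hasDeriv 0 x).add_const 1).sub
      (((hasDerivAt_pow 2 x)).div_const 2)
    convert h using 1
    ring
  have hpos : ∀ x : ℝ, x ≠ 0 → 0 < x * (Real.exp x - 1) := by
    intro x hx
    rcases hx.lt_or_gt with h | h
    · exact mul_pos_of_neg_of_neg h (by simpa using Real.exp_lt_one_iff.2 h)
    · exact mul_pos h (by simpa [sub_pos] using Real.one_lt_exp_iff.2 h)
  have := aux_mono _ _ hf hpos
  constructor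
  · intro d hd
    have := this.1 d hd
    simp at this
    nlinarith
  · intro d hd
    have := this.2 d hd
    simp at this
    nlinarith

/-- `φ(d) = e^d (d-1) + 1` compared with `e^d d²/2`. -/
private lemma phi_B :
    (∀ d, 0 < d → Real.exp d * (d - 1) + 1 < Real.exp d * d ^ 2 / 2) ∧
    (∀ d, d < 0 → Real.exp d * d ^ 2 / 2 < Real.exp d * (d - 1) + 1) := by
  have hf : ∀ x : ℝ, HasDerivAt (fun y => Real.exp y * y ^ 2 / 2 - (Real.exp y * (y - 1) + 1))
      (Real.exp x * x ^ 2 / 2) x := by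
    intro x
    have h : HasDerivAt (fun y => Real.exp y * y ^ 2 / 2 - (Real.exp y * (y - 1) + 1)) _ x :=
      (((Real.hasDerivAt_exp x).mul (hasDerivAt_pow 2 x)).div_const 2).sub
      ((aux_hasDeriv 0 x).add_const 1)
    convert h using 1
    ring
  have hpos : ∀ x : ℝ, x ≠ 0 → 0 < Real.exp x * x ^ 2 / 2 := by
    intro x hx
    positivity
  have := aux_mono _ _ hf hpos
  constructor
  · intro d hd
    have := this.1 d hd
    simp at this
    nlinarith
  · intro d hd
    have := this.2 d hd
    simp at this
    nlinarith

theorem upwind_slab_energy_identity (s t : ℝ) (hst : s ≤ t) (u u' : ℝ → ℝ)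
    (hderiv : ∀ τ ∈ Set.Icc s t, HasDerivAt u (u' τ) τ)
    (hcont : ContinuousOn u' (Set.Icc s t))
    (p : ℝ) (hp : p ≠ u s) :
    ∃ ξ : ℝ, min p (u s) < ξ ∧ ξ < max p (u s) ∧
      (∫ τ in s..t, u τ * u' τ * Real.exp (u τ))
          + (Real.exp (u s) - Real.exp p) * u s
        = U (u t) - U p + (1 / 2) * Real.exp ξ * (p - u s) ^ 2 := by
  obtain ⟨a, ha⟩ : ∃ a, u s = a := ⟨u s, rfl⟩
  obtain ⟨d, hd⟩ : ∃ d, p = a + d := ⟨p - a, by ring⟩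
  have hd0 : d ≠ 0 := by
    intro h
    apply hp
    rw [hd, h, ha, add_zero]
  -- φ is positive
  have hφpos : 0 < Real.exp d * (d - 1) + 1 := by
    rcases hd0.lt_or_gt with h | h
    · have h1 := phi_B.2 d h
      have h2 : 0 < Real.exp d * d ^ 2 / 2 := by positivity
      linarith
    · have h1 := phi_A.1 d h
      nlinarith [sq_nonneg d]
  -- the integral
  have hint : (∫ τ in s..t, u τ * u' τ * Real.exp (u τ)) = U (u t) - U (u s) := by
    apply intervalIntegral.integral_eq_sub_of_hasDerivAt
    · intro τ hτ
      rw [Set.uIcc_of_le hst] at hτ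
      have h1 : HasDerivAt (fun τ => Real.exp (u τ) * (u τ - 1)) _ τ :=
        (aux_hasDeriv 0 (u τ)).comp τ (hderiv τ hτ)
      have hU : U = fun y => Real.exp y * (y - 1) := rfl
      rw [hU]
      refine h1.congr_deriv ?_
      ring
    · have hu : ContinuousOn u (Set.Icc s t) :=
        fun x hx => (hderiv x hx).continuousAt.continuousWithinAt
      exact ((hu.mul hcont).mul
        (Real.continuous_exp.comp_continuousOn hu)).intervalIntegrable_of_Icc hst
  have hdsq : (0:ℝ) < d ^ 2 := by positivity
  have hvpos : 0 < 2 * Real.exp a * (Real.exp d * (d - 1) + 1) / d ^ 2 := by positivity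
  have hep : Real.exp p = Real.exp a * Real.exp d := by
    rw [hd, Real.exp_add]
  have hea := Real.exp_pos a
  refine ⟨Real.log (2 * Real.exp a * (Real.exp d * (d - 1) + 1) / d ^ 2), ?_, ?_, ?_⟩
  · rw [ha, Real.lt_log_iff_exp_lt hvpos, lt_div_iff₀ hdsq]
    rcases hd0.lt_or_gt with h | h
    · have hpa : p ≤ a := by rw [hd]; linarith
      rw [min_eq_left hpa, hep]
      have h1 := phi_B.2 d h
      nlinarith
    · have hpa : a ≤ p := by rw [hd]; linarith
      rw [min_eq_right hpa]
      have h1 := phi_A.1 d h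
      nlinarith
  · rw [ha, Real.log_lt_iff_lt_exp hvpos, div_lt_iff₀ hdsq]
    rcases hd0.lt_or_gt with h | h
    · have hpa : p ≤ a := by rw [hd]; linarith
      rw [max_eq_right hpa]
      have h1 := phi_A.2 d h
      nlinarith
    · have hpa : a ≤ p := by rw [hd]; linarith
      rw [max_eq_left hpa, hep]
      have h1 := phi_B.1 d h
      nlinarith
  · rw [hint, Real.exp_log hvpos, ha, hd]
    simp only [U]
    rw [Real.exp_add]
    field_simp
    ring
end
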